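/- Let λ ∈ (0,1) and k ≥ 1. Define the k×k symmetric matrix Φ_k = Σ_{t=0}^{k−1} φ_t φ_t^T, where φ_t ∈ ℝ^k has entries (φ_t)_j = λ^{t−j+1} for 1 ≤ j ≤ t+1 and 0 otherwise. Then the operator norm of Φ_k satisfies ‖Φ_k‖ ≤ 1/(1−λ)². -/

import Mathlib

open Matrix

lemma geomb (lam : ℝ) (h0 : 0 ≤ lam) (h1 : lam < 1) (n : ℕ) :
    ∑ m ∈ Finset.range n, lam ^ m ≤ 1 / (1 - lam) := by
  rw [geom_sum_eq (by linarith) n]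
  have h2 : (0:ℝ) < 1 - lam := by linarith
  have he : (lam ^ n - 1) / (lam - 1) = (1 - lam ^ n) / (1 - lam) := by
    rw [← neg_div_neg_eq]; ring_nf
  rw [he]
  have := pow_nonneg h0 n
  gcongr
  all_goals linarith

lemma tail_bound (lam : ℝ) (h0 : 0 ≤ lam) (h1 : lam < 1) (k i : ℕ) :
    ∑ j ∈ Finset.range k, (if j ≤ i then lam ^ (i - j) else 0) ≤ 1 / (1 - lam) := by
  calc ∑ j ∈ Finset.range k, (if j ≤ i then lam ^ (i - j) else 0)
      ≤ ∑ j ∈ Finset.range (max k (i+1)), (if j ≤ i then lam ^ (i - j) else 0) := by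
        apply Finset.sum_le_sum_of_subset_of_nonneg
        · exact Finset.range_subset_range.2 (le_max_left _ _)
        · intro j _ _; positivity
    _ = ∑ j ∈ Finset.range (i+1), lam ^ (i - j) := by
        rw [← Finset.sum_subset (Finset.range_subset_range.2 (le_max_right _ _))]
        · apply Finset.sum_congr rfl; intro j hj
          rw [Finset.mem_range] at hj; rw [if_pos (by omega)]
        · intro j _ hj; rw [Finset.mem_range] at hj; rw [if_neg (by omega)]
    _ = ∑ j ∈ Finset.range (i+1), lam ^ j := by
        rw [← Finset.sum_range_reflect]
        apply Finset.sum_congr rfl; intro j hj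
        rw [Finset.mem_range] at hj; congr 1; omega
    _ ≤ 1 / (1 - lam) := geomb lam h0 h1 _

lemma head_bound (lam : ℝ) (h0 : 0 ≤ lam) (h1 : lam < 1) (k i : ℕ) :
    ∑ t ∈ Finset.range k, (if i ≤ t then lam ^ (t - i) else 0) ≤ 1 / (1 - lam) := by
  calc ∑ t ∈ Finset.range k, (if i ≤ t then lam ^ (t - i) else 0)
      ≤ ∑ t ∈ Finset.range (max k i), (if i ≤ t then lam ^ (t - i) else 0) := by
        apply Finset.sum_le_sum_of_subset_of_nonneg
        · exact Finset.range_subset_range.2 (le_max_left _ _)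
        · intro j _ _; positivity
    _ = ∑ t ∈ Finset.Ico i (max k i), (if i ≤ t then lam ^ (t - i) else 0) := by
        rw [← Finset.sum_subset]
        · intro t ht
          rw [Finset.mem_Ico] at ht; rw [Finset.mem_range]; omega
        · intro t ht ht2
          rw [Finset.mem_range] at ht; rw [Finset.mem_Ico] at ht2
          rw [if_neg (by omega)]
    _ = ∑ t ∈ Finset.Ico i (max k i), lam ^ (t - i) := by
        apply Finset.sum_congr rfl; intro t ht
        rw [Finset.mem_Ico] at ht; rw [if_pos ht.1]
    _ = ∑ m ∈ Finset.range (max k i - i), lam ^ m := by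
        rw [Finset.sum_Ico_eq_sum_range]
        apply Finset.sum_congr rfl; intro m _; congr 1; omega
    _ ≤ 1 / (1 - lam) := geomb lam h0 h1 _

/-- the operator (Euclidean) norm of Φ_k = Σ_t φ_t φ_tᵀ, with
φ_t = [λ^t, …, λ, 1, 0, …, 0]ᵀ, is at most 1/(1−λ)². -/
theorem stmt8 (lam : ℝ) (hlam : lam ∈ Set.Ioo (0:ℝ) 1) (k : ℕ) (hk : 1 ≤ k)
    (φ : Fin k → Fin k → ℝ)
    (hφ : ∀ t j, φ t j = if (j:ℕ) ≤ (t:ℕ) then lam ^ ((t:ℕ) - (j:ℕ)) else 0)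
    (Φ : Matrix (Fin k) (Fin k) ℝ)
    (hΦ : Φ = ∑ t, Matrix.vecMulVec (φ t) (φ t)) :
    ∀ x : EuclideanSpace ℝ (Fin k),
      ‖Matrix.toEuclideanLin Φ x‖ ≤ (1/(1-lam)^2) * ‖x‖ := by
  obtain ⟨h0, h1⟩ := hlam
  have h0' : 0 ≤ lam := le_of_lt h0
  intro x
  set C : ℝ := 1/(1-lam) with hCdef
  have hC0 : 0 ≤ C := by
    have h2 : (0:ℝ) < 1 - lam := by linarith
    rw [hCdef]; positivity
  -- entries of Φ
  have hent : ∀ i j, Φ i j = ∑ t, φ t i * φ t j := by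
    intro i j; rw [hΦ]; simp [Matrix.sum_apply, Matrix.vecMulVec_apply]
  have hφnn : ∀ t j, 0 ≤ φ t j := by
    intro t j; rw [hφ]; split <;> positivity
  have hnn : ∀ i j, 0 ≤ Φ i j := by
    intro i j; rw [hent]
    exact Finset.sum_nonneg fun t _ => mul_nonneg (hφnn t i) (hφnn t j)
  -- row sums
  have hsumj : ∀ t : Fin k, ∑ j, φ t j ≤ C := by
    intro t
    have : ∑ j, φ t j = ∑ j ∈ Finset.range k,
        (if j ≤ (t:ℕ) then lam ^ ((t:ℕ) - j) else 0) := by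
      rw [← Fin.sum_univ_eq_sum_range (fun j => if j ≤ (t:ℕ) then lam ^ ((t:ℕ) - j) else 0) k]
      exact Finset.sum_congr rfl fun j _ => hφ t j
    rw [this]; exact tail_bound lam h0' h1 k t
  have hsumt : ∀ i : Fin k, ∑ t, φ t i ≤ C := by
    intro i
    have : ∑ t, φ t i = ∑ t ∈ Finset.range k,
        (if (i:ℕ) ≤ t then lam ^ (t - (i:ℕ)) else 0) := by
      rw [← Fin.sum_univ_eq_sum_range (fun t => if (i:ℕ) ≤ t then lam ^ (t - (i:ℕ)) else 0) k]
      exact Finset.sum_congr rfl fun t _ => hφ t i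
    rw [this]; exact head_bound lam h0' h1 k i
  have hrow : ∀ i, ∑ j, Φ i j ≤ C ^ 2 := by
    intro i
    have : ∑ j, Φ i j = ∑ t, φ t i * ∑ j, φ t j := by
      simp only [hent, Finset.mul_sum]
      rw [Finset.sum_comm]
    rw [this, sq]
    calc ∑ t, φ t i * ∑ j, φ t j ≤ ∑ t, φ t i * C := by
          apply Finset.sum_le_sum; intro t _
          exact mul_le_mul_of_nonneg_left (hsumj t) (hφnn t i)
      _ = (∑ t, φ t i) * C := by rw [← Finset.sum_mul]
      _ ≤ C * C := mul_le_mul_of_nonneg_right (hsumt i) hC0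
  have hcol : ∀ j, ∑ i, Φ i j ≤ C ^ 2 := by
    intro j
    have : ∑ i, Φ i j = ∑ i, Φ j i :=
      Finset.sum_congr rfl fun i _ => by
        rw [hent, hent]; exact Finset.sum_congr rfl fun t _ => mul_comm _ _
    rw [this]; exact hrow j
  -- set up vectors
  set v : Fin k → ℝ := fun j => x j with hv
  have key : ∑ i, (Φ.mulVec v) i ^ 2 ≤ (C ^ 2) ^ 2 * ∑ j, (v j) ^ 2 := by
    have hterm : ∀ i, (Φ.mulVec v) i ^ 2 ≤ C ^ 2 * ∑ j, Φ i j * (v j) ^ 2 := by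
      intro i
      have habs : |(Φ.mulVec v) i| ≤ ∑ j, Φ i j * |v j| := by
        rw [Matrix.mulVec, dotProduct]
        refine le_trans (Finset.abs_sum_le_sum_abs _ _) ?_
        apply le_of_eq
        exact Finset.sum_congr rfl fun j _ => by
          rw [abs_mul, abs_of_nonneg (hnn i j)]
      have hcs : (∑ j, Φ i j * |v j|) ^ 2 ≤ (∑ j, Φ i j) * (∑ j, Φ i j * (v j) ^ 2) := by
        have h := Finset.sum_mul_sq_le_sq_mul_sq Finset.univ
          (fun j => Real.sqrt (Φ i j)) (fun j => Real.sqrt (Φ i j) * |v j|)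
        have e1 : ∀ j : Fin k, Real.sqrt (Φ i j) * (Real.sqrt (Φ i j) * |v j|)
            = Φ i j * |v j| := by
          intro j; rw [← mul_assoc, Real.mul_self_sqrt (hnn i j)]
        have e2 : ∀ j : Fin k, Real.sqrt (Φ i j) ^ 2 = Φ i j := fun j =>
          Real.sq_sqrt (hnn i j)
        have e3 : ∀ j : Fin k, (Real.sqrt (Φ i j) * |v j|) ^ 2 = Φ i j * (v j) ^ 2 := by
          intro j; rw [mul_pow, Real.sq_sqrt (hnn i j), sq_abs]
        simp only [e1, e2, e3] at h
        exact h
      have hpos : 0 ≤ ∑ j, Φ i j * (v j) ^ 2 :=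
        Finset.sum_nonneg fun j _ => mul_nonneg (hnn i j) (sq_nonneg _)
      calc (Φ.mulVec v) i ^ 2 = |(Φ.mulVec v) i| ^ 2 := (sq_abs _).symm
        _ ≤ (∑ j, Φ i j * |v j|) ^ 2 := by
            apply pow_le_pow_left₀ (abs_nonneg _) habs
        _ ≤ (∑ j, Φ i j) * (∑ j, Φ i j * (v j) ^ 2) := hcs
        _ ≤ C ^ 2 * ∑ j, Φ i j * (v j) ^ 2 :=
            mul_le_mul_of_nonneg_right (hrow i) hpos
    calc ∑ i, (Φ.mulVec v) i ^ 2 ≤ ∑ i, C ^ 2 * ∑ j, Φ i j * (v j) ^ 2 :=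
          Finset.sum_le_sum fun i _ => hterm i
      _ = C ^ 2 * ∑ j, (∑ i, Φ i j) * (v j) ^ 2 := by
          rw [← Finset.mul_sum, Finset.sum_comm]
          simp only [Finset.sum_mul]
      _ ≤ C ^ 2 * ∑ j, C ^ 2 * (v j) ^ 2 := by
          apply mul_le_mul_of_nonneg_left _ (sq_nonneg C)
          exact Finset.sum_le_sum fun j _ =>
            mul_le_mul_of_nonneg_right (hcol j) (sq_nonneg _)
      _ = (C ^ 2) ^ 2 * ∑ j, (v j) ^ 2 := by rw [← Finset.mul_sum]; ring
  -- conclude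
  rw [Matrix.toEuclideanLin_apply, EuclideanSpace.norm_eq, EuclideanSpace.norm_eq]
  simp only [PiLp.toLp_apply, Real.norm_eq_abs, sq_abs]
  have hfin : Real.sqrt (∑ i, (Φ.mulVec v) i ^ 2)
      ≤ C ^ 2 * Real.sqrt (∑ j, (v j) ^ 2) := by
    refine le_trans (Real.sqrt_le_sqrt key) ?_
    rw [Real.sqrt_mul (sq_nonneg _), Real.sqrt_sq (sq_nonneg C)]
  have hCeq : (1:ℝ)/(1-lam)^2 = C ^ 2 := by rw [hCdef, div_pow, one_pow]
  rw [hCeq]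
  convert hfin using 3
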